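/- For all γ > 5/3, one has (3γ-1)/(√3(γ-1)+2) < λ̂_3(γ) = 1 + 2(γ-1)/((γ+1)+√(8(γ-1))). -/
import Mathlib


theorem stmt_11 (γ : ℝ) (hγ : 5 / 3 < γ) :
    (3 * γ - 1) / (Real.sqrt 3 * (γ - 1) + 2)
      < 1 + 2 * (γ - 1) / ((γ + 1) + Real.sqrt (8 * (γ - 1))) := by
  set s := Real.sqrt 3 with hs
  set t := Real.sqrt (8 * (γ - 1)) with ht
  have hγ1 : (1 : ℝ) < γ := by linarith
  have hs2 : s ^ 2 = 3 := Real.sq_sqrt (by norm_num)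
  have ht2 : t ^ 2 = 8 * (γ - 1) := Real.sq_sqrt (by linarith)
  have hs1 : 1 < s := by nlinarith [Real.sqrt_nonneg 3]
  have htpos : 0 < t := Real.sqrt_pos.mpr (by linarith)
  have hst : s * t < 3 * γ - 1 := by
    have h1 : (s * t) ^ 2 < (3 * γ - 1) ^ 2 := by
      have : (s * t) ^ 2 = 24 * (γ - 1) := by
        rw [mul_pow, hs2, ht2]; ring
      nlinarith [sq_nonneg (3 * γ - 5)]
    exact lt_of_pow_lt_pow_left₀ 2 (by linarith) h1
  have hA : 0 < s * (γ - 1) + 2 := by nlinarith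
  have hB : 0 < (γ + 1) + t := by linarith
  have hR : 1 + 2 * (γ - 1) / ((γ + 1) + t)
      = ((γ + 1) + t + 2 * (γ - 1)) / ((γ + 1) + t) := by
    field_simp
  rw [hR, div_lt_div_iff₀ hA hB]
  have hdiff : ((γ + 1) + t + 2 * (γ - 1)) * (s * (γ - 1) + 2)
      - (3 * γ - 1) * ((γ + 1) + t)
      = (γ - 1) * (s - 1) * ((3 * γ - 1) - s * t) := by
    linear_combination (γ - 1) * t * hs2
  nlinarith [mul_pos (mul_pos (sub_pos.mpr hγ1) (sub_pos.mpr hs1)) (sub_pos.mpr hst)]
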